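/- arXiv:2004.13491 — 3 statements merged into one kernel-verified Lean document; each statement's English description precedes it below -/
import Mathlib

section
/- For every temporal graph 𝒢 with lifetime τ, the temporal treewidth ttw(𝒢) (defined as the treewidth of the undirected static expansion) satisfies tw_↓(𝒢) ≤ ttw(𝒢) ≤ (tw_↓(𝒢) + 1)·τ − 1. -/
/-- A tree decomposition of a simple graph `G`: a tree `T` with bags `B_u ⊆ V` such that
the bags cover all vertices, every edge is contained in some bag, and for each vertex the
set of tree nodes whose bag contains it induces a connected subtree. -/
structure TreeDecomp {V : Type} (G : SimpleGraph V) : Type 1 where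
  ι : Type
  T : SimpleGraph ι
  isTree : T.IsTree
  bags : ι → Set V
  bags_cover : ∀ v : V, ∃ i, v ∈ bags i
  bags_edge : ∀ ⦃v w : V⦄, G.Adj v w → ∃ i, v ∈ bags i ∧ w ∈ bags i
  bags_subtree : ∀ v : V, (SimpleGraph.induce {i | v ∈ bags i} T).Connected

/-- The width of a tree decomposition: the supremum of bag sizes minus one. -/
noncomputable def TreeDecomp.width {V : Type} {G : SimpleGraph V} (d : TreeDecomp G) : ℕ∞ :=
  ⨆ i, ((d.bags i).encard - 1)

/-- The treewidth of a graph: the minimum width over all tree decompositions. -/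
noncomputable def treewidth {V : Type} (G : SimpleGraph V) : ℕ∞ :=
  ⨅ d : TreeDecomp G, d.width

/-- The underlying graph of a temporal graph given by its layers: the union of all layers. -/
def underlying {V : Type} {τ : ℕ} (layers : Fin τ → SimpleGraph V) : SimpleGraph V :=
  ⨆ i, layers i

/-- The undirected static expansion of a temporal graph: vertices are vertex appearances
`(v, t)`, with layer edges `{(v,t),(w,t)}` for each temporal edge `({v,w},t)` and column
edges `{(v,t),(v,t+1)}`. -/
def expansion {V : Type} {τ : ℕ} (layers : Fin τ → SimpleGraph V) :
    SimpleGraph (V × Fin τ) :=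
  SimpleGraph.fromRel (fun p q =>
    (p.2 = q.2 ∧ (layers p.2).Adj p.1 q.1) ∨ (p.1 = q.1 ∧ (p.2 : ℕ) + 1 = (q.2 : ℕ)))


open SimpleGraph

lemma induce_connected_of_subsingleton {ι : Type} (T : SimpleGraph ι) (s : Set ι)
    (hne : s.Nonempty) (hss : s.Subsingleton) : (T.induce s).Connected := by
  haveI : Nonempty s := ⟨⟨hne.choose, hne.choose_spec⟩⟩
  exact ⟨fun a b => by
    have : a = b := Subtype.ext (hss a.2 b.2)
    exact this ▸ Reachable.refl a⟩

/-- star graph on `Option V` centered at `none`. -/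
def starO (V : Type) : SimpleGraph (Option V) where
  Adj a b := a ≠ b ∧ (a = none ∨ b = none)
  symm := ⟨fun a b h => ⟨h.1.symm, h.2.symm⟩⟩
  loopless := ⟨fun a h => h.1 rfl⟩

lemma starO_no_cycle_at_none {V : Type} (c : (starO V).Walk none none) : ¬ c.IsCycle := by
  intro hc
  cases c with
  | nil => exact hc.ne_nil rfl
  | cons h₁ q =>
    cases q with
    | nil => exact h₁.1 rfl
    | cons h₂ r =>
      rename_i v w
      have hv : v ≠ none := fun hv => h₁.1 hv.symm
      have hw : w = none := h₂.2.resolve_left hv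
      subst hw
      cases r with
      | nil =>
        have h3 := hc.three_le_length
        simp only [SimpleGraph.Walk.length_cons, SimpleGraph.Walk.length_nil] at h3
        omega
      | cons h₃ s =>
        have hmem : none ∈ s.support := s.end_mem_support
        have hn := hc.support_nodup
        simp [SimpleGraph.Walk.support_cons, List.nodup_cons, hmem] at hn

lemma starO_isTree (V : Type) : (starO V).IsTree := by
  have hreach : ∀ a : Option V, (starO V).Reachable a none := by
    intro a
    by_cases h : a = none
    · exact h ▸ Reachable.refl _
    · exact SimpleGraph.Adj.reachable ⟨h, Or.inr rfl⟩
  constructor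
  · exact ⟨fun a b => (hreach a).trans (hreach b).symm⟩
  · intro u c hc
    classical
    have hn : none ∈ c.support := by
      cases c with
      | nil => exact absurd rfl hc.ne_nil
      | cons h q =>
        rcases h.2 with h' | h'
        · rw [← h']; exact SimpleGraph.Walk.start_mem_support _
        · rw [SimpleGraph.Walk.support_cons]
          exact List.mem_cons_of_mem _ (h' ▸ q.start_mem_support)
    exact starO_no_cycle_at_none (c.rotate none hn) (hc.rotate hn)


lemma unit_bot_isTree : (⊥ : SimpleGraph Unit).IsTree := by
  constructor
  · exact ⟨fun a b => by rw [Subsingleton.elim a b]⟩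
  · intro v c hc
    cases c with
    | nil => exact hc.ne_nil rfl
    | cons h _ => exact h

noncomputable def trivialDecomp {V : Type} (G : SimpleGraph V) : TreeDecomp G where
  ι := Unit
  T := ⊥
  isTree := unit_bot_isTree
  bags _ := Set.univ
  bags_cover v := ⟨(), trivial⟩
  bags_edge v w _ := ⟨(), trivial, trivial⟩
  bags_subtree v :=
    induce_connected_of_subsingleton _ _ ⟨(), trivial⟩ (fun a _ b _ => Subsingleton.elim a b)

instance {V : Type} (G : SimpleGraph V) : Nonempty (TreeDecomp G) := ⟨trivialDecomp G⟩

lemma treewidth_bot_le (V : Type) : treewidth (⊥ : SimpleGraph V) ≤ 0 := by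
  refine iInf_le_of_le
    ⟨Option V, starO V, starO_isTree V, fun i => i.elim ∅ (fun v => {v}), ?_, ?_, ?_⟩ ?_
  · exact fun v => ⟨some v, rfl⟩
  · exact fun v w h => h.elim
  · intro v
    have hset : {i : Option V | v ∈ i.elim ∅ (fun v => ({v} : Set V))} = {some v} := by
      ext i
      cases i with
      | none => simp
      | some w => simp [eq_comm]
    rw [hset]
    exact induce_connected_of_subsingleton _ _ ⟨some v, rfl⟩ (fun a ha b hb => ha.trans hb.symm)
  · simp only [TreeDecomp.width]
    apply iSup_le
    intro i
    cases i with
    | none => simp [zero_tsub]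
    | some w => simp

lemma ENat.exists_eq_iInf' {ι : Type 1} [Nonempty ι] (f : ι → ℕ∞) : ∃ i, f i = ⨅ j, f j := by
  obtain ⟨x, ⟨i, rfl⟩, hmin⟩ := wellFounded_lt.has_min (Set.range f) (Set.range_nonempty f)
  exact ⟨i, le_antisymm (le_iInf fun j => not_lt.1 (hmin _ ⟨j, rfl⟩)) (iInf_le _ i)⟩

lemma chain_union_connected {ι : Type} {T : SimpleGraph ι} {τ : ℕ} (A : Fin τ → Set ι)
    (hconn : ∀ t, (T.induce (A t)).Connected)
    (hover : ∀ t s : Fin τ, (t : ℕ) + 1 = (s : ℕ) → (A t ∩ A s).Nonempty) :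
    ∀ n : ℕ, n < τ → (T.induce (⋃ (t : Fin τ) (_ : (t : ℕ) ≤ n), A t)).Connected := by
  intro n
  induction n with
  | zero =>
    intro h0
    have hset : (⋃ (t : Fin τ) (_ : (t : ℕ) ≤ 0), A t) = A ⟨0, h0⟩ := by
      apply subset_antisymm
      · intro x hx
        simp only [Set.mem_iUnion] at hx
        obtain ⟨t, ht, hx⟩ := hx
        have : t = ⟨0, h0⟩ := Fin.ext (Nat.le_zero.1 ht)
        rwa [← this]
      · intro x hx
        exact Set.mem_iUnion.2 ⟨⟨0, h0⟩, Set.mem_iUnion.2 ⟨le_refl 0, hx⟩⟩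
    rw [hset]
    exact hconn _
  | succ n ih =>
    intro hn1
    have hn : n < τ := Nat.lt_of_succ_lt hn1
    have heq : (⋃ (t : Fin τ) (_ : (t : ℕ) ≤ n + 1), A t)
        = (⋃ (t : Fin τ) (_ : (t : ℕ) ≤ n), A t) ∪ A ⟨n + 1, hn1⟩ := by
      ext x
      simp only [Set.mem_iUnion, Set.mem_union]
      constructor
      · rintro ⟨t, ht, hx⟩
        by_cases h : (t : ℕ) ≤ n
        · exact Or.inl ⟨t, h, hx⟩
        · have hteq : (t : ℕ) = n + 1 := by omega
          have : t = ⟨n + 1, hn1⟩ := Fin.ext hteq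
          exact Or.inr (this ▸ hx)
      · rintro (⟨t, ht, hx⟩ | hx)
        · exact ⟨t, le_trans ht (Nat.le_succ n), hx⟩
        · exact ⟨⟨n + 1, hn1⟩, le_refl _, hx⟩
    rw [heq]
    apply SimpleGraph.induce_union_connected (ih hn).preconnected (hconn _).preconnected
    obtain ⟨x, hx1, hx2⟩ := hover ⟨n, hn⟩ ⟨n + 1, hn1⟩ rfl
    exact ⟨x, Set.mem_iUnion.2 ⟨⟨n, hn⟩, Set.mem_iUnion.2 ⟨le_refl n, hx1⟩⟩, hx2⟩

lemma ENat.card_prod' (α β : Type) : ENat.card (α × β) = ENat.card α * ENat.card β := by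
  simp [ENat.card, Cardinal.mk_prod, Cardinal.lift_id, map_mul]

lemma encard_prod_univ {V : Type} (s : Set V) (τ : ℕ) :
    (s ×ˢ (Set.univ : Set (Fin τ))).encard = s.encard * τ := by
  have h1 : (s ×ˢ (Set.univ : Set (Fin τ))).encard = ENat.card (↥s × Fin τ) := by
    rw [Set.encard,
      ENat.card_congr ((Equiv.Set.prod s Set.univ).trans
        (Equiv.prodCongr (Equiv.refl _) (Equiv.Set.univ _)))]
  rw [h1, ENat.card_prod']
  congr 1
  simp [ENat.card_eq_coe_fintype_card]

/-- the temporal treewidth (treewidth of the undirected static expansion)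
satisfies `tw_↓(𝒢) ≤ ttw(𝒢) ≤ (tw_↓(𝒢) + 1)·τ − 1`. -/
theorem temporal_treewidth_bounds {V : Type} {τ : ℕ}
    (layers : Fin τ → SimpleGraph V) :
    treewidth (underlying layers) ≤ treewidth (expansion layers) ∧
      treewidth (expansion layers) ≤
        (treewidth (underlying layers) + 1) * (τ : ℕ∞) - 1 := by
  constructor
  · -- lower bound
    rcases Nat.eq_zero_or_pos τ with hτ | hτ
    · subst hτ
      have hbot : underlying layers = ⊥ := by
        ext v w
        simp only [underlying, SimpleGraph.iSup_adj, SimpleGraph.bot_adj, iff_false]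
        rintro ⟨i, -⟩
        exact i.elim0
      rw [hbot]
      exact le_trans (treewidth_bot_le V) zero_le
    · apply le_iInf
      intro d
      refine iInf_le_of_le
        ⟨d.ι, d.T, d.isTree, fun i => Prod.fst '' d.bags i, ?_, ?_, ?_⟩ ?_
      · intro v
        obtain ⟨i, hi⟩ := d.bags_cover (v, ⟨0, hτ⟩)
        exact ⟨i, ⟨(v, ⟨0, hτ⟩), hi, rfl⟩⟩
      · intro v w hvw
        rw [underlying, SimpleGraph.iSup_adj] at hvw
        obtain ⟨t, ht⟩ := hvw
        have hadj : (expansion layers).Adj (v, t) (w, t) := by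
          rw [expansion, SimpleGraph.fromRel_adj]
          exact ⟨fun h => ht.ne (congrArg Prod.fst h), Or.inl (Or.inl ⟨rfl, ht⟩)⟩
        obtain ⟨i, h1, h2⟩ := d.bags_edge hadj
        exact ⟨i, ⟨_, h1, rfl⟩, ⟨_, h2, rfl⟩⟩
      · intro v
        have hset : {i | v ∈ Prod.fst '' d.bags i}
            = ⋃ (t : Fin τ) (_ : (t : ℕ) ≤ τ - 1), {i | (v, t) ∈ d.bags i} := by
          ext i
          simp only [Set.mem_setOf_eq, Set.mem_image, Set.mem_iUnion]
          constructor
          · rintro ⟨⟨v', t⟩, h, rfl⟩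
            exact ⟨t, by omega, h⟩
          · rintro ⟨t, -, ht⟩
            exact ⟨(v, t), ht, rfl⟩
        rw [hset]
        apply chain_union_connected (fun t => {i | (v, t) ∈ d.bags i})
          (fun t => d.bags_subtree (v, t)) ?_ (τ - 1) (by omega)
        intro t s hts
        have hadj : (expansion layers).Adj (v, t) (v, s) := by
          rw [expansion, SimpleGraph.fromRel_adj]
          refine ⟨fun h => ?_, Or.inl (Or.inr ⟨rfl, hts⟩)⟩
          have : (t : ℕ) = (s : ℕ) := congrArg (fun p => ((Prod.snd p : Fin τ) : ℕ)) h
          omega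
        obtain ⟨i, h1, h2⟩ := d.bags_edge hadj
        exact ⟨i, h1, h2⟩
      · simp only [TreeDecomp.width]
        apply iSup_le
        intro i
        exact le_trans (tsub_le_tsub_right (Set.encard_image_le _ _) 1)
          (le_iSup (fun i => ((d.bags i).encard - 1)) i)
  · -- upper bound
    obtain ⟨d, hd⟩ := ENat.exists_eq_iInf' (fun d : TreeDecomp (underlying layers) => d.width)
    have h' : treewidth (underlying layers) = d.width := hd.symm
    rw [h', treewidth]
    refine iInf_le_of_le
      ⟨d.ι, d.T, d.isTree, fun i => d.bags i ×ˢ Set.univ, ?_, ?_, ?_⟩ ?_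
    · intro p
      obtain ⟨i, hi⟩ := d.bags_cover p.1
      exact ⟨i, hi, trivial⟩
    · intro p q hpq
      rw [expansion, SimpleGraph.fromRel_adj] at hpq
      obtain ⟨hne, h | h⟩ := hpq
      · rcases h with ⟨-, hadj⟩ | ⟨heq, -⟩
        · have : (underlying layers).Adj p.1 q.1 := by
            rw [underlying, SimpleGraph.iSup_adj]; exact ⟨p.2, hadj⟩
          obtain ⟨i, h1, h2⟩ := d.bags_edge this
          exact ⟨i, ⟨h1, trivial⟩, ⟨h2, trivial⟩⟩
        · obtain ⟨i, hi⟩ := d.bags_cover p.1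
          exact ⟨i, ⟨hi, trivial⟩, ⟨heq ▸ hi, trivial⟩⟩
      · rcases h with ⟨-, hadj⟩ | ⟨heq, -⟩
        · have : (underlying layers).Adj p.1 q.1 := by
            rw [underlying, SimpleGraph.iSup_adj]; exact ⟨q.2, hadj.symm⟩
          obtain ⟨i, h1, h2⟩ := d.bags_edge this
          exact ⟨i, ⟨h1, trivial⟩, ⟨h2, trivial⟩⟩
        · obtain ⟨i, hi⟩ := d.bags_cover q.1
          exact ⟨i, ⟨heq ▸ hi, trivial⟩, ⟨hi, trivial⟩⟩
    · intro p
      have hset : {i | p ∈ d.bags i ×ˢ (Set.univ : Set (Fin τ))} = {i | p.1 ∈ d.bags i} := by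
        ext i
        simp [Set.mem_prod]
      rw [hset]
      exact d.bags_subtree p.1
    · simp only [TreeDecomp.width]
      apply iSup_le
      intro i
      rw [encard_prod_univ]
      have h2 : (d.bags i).encard ≤ d.width + 1 :=
        tsub_le_iff_right.1 (le_iSup (fun i => ((d.bags i).encard - 1)) i)
      exact tsub_le_tsub_right (mul_le_mul_left h2 _) 1
end

section
/- Given a tree decomposition (T, {B_u}) of the underlying graph G_↓ of a temporal graph 𝒢 with lifetime τ, the family (T, {B_u × [τ]}) obtained by replacing each vertex v in each bag by all pairs (v,1),…,(v,τ) is a valid tree decomposition of the undirected static expansion of 𝒢, of width (width(T, {B_u}) + 1)·τ − 1. -/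
lemma my_encard_prod {α β : Type} (s : Set α) (t : Set β) :
    (s ×ˢ t).encard = s.encard * t.encard := by
  simp only [Set.encard, ENat.card]
  rw [Cardinal.mk_congr (Equiv.Set.prod s t), Cardinal.mk_prod,
    Cardinal.lift_id, Cardinal.lift_id, map_mul]

lemma arith_aux {ι : Type} [Nonempty ι] {τ : ℕ} (hτ : 1 ≤ τ) (e : ι → ℕ∞)
    (hpos : ∃ u, 1 ≤ e u) :
    ⨆ u, (e u * τ - 1) = ((⨆ u, (e u - 1)) + 1) * (τ : ℕ∞) - 1 := by
  set W : ℕ∞ := ⨆ u, (e u - 1) with hW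
  have hτ1 : (1 : ℕ∞) ≤ (τ : ℕ∞) := by exact_mod_cast hτ
  apply le_antisymm
  · apply iSup_le
    intro u
    have h1 : e u ≤ W + 1 :=
      le_trans le_tsub_add (add_le_add (le_iSup (fun u => e u - 1) u) le_rfl)
    exact tsub_le_tsub_right (mul_le_mul_left h1 _) 1
  · rcases eq_or_ne W ⊤ with hWt | hWt
    · refine le_trans le_top (hWt ▸ iSup_mono fun u => ?_)
      exact tsub_le_tsub_right (le_mul_of_one_le_right' hτ1) 1
    · lift W to ℕ using hWt with n hn
      have hu0 : ∃ u, e u = (n : ℕ∞) + 1 := by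
        rcases Nat.eq_zero_or_pos n with h0 | hpos'
        · subst h0
          obtain ⟨u, hu⟩ := hpos
          refine ⟨u, le_antisymm ?_ (by simpa using hu)⟩
          have h2 : e u - 1 ≤ ((0:ℕ) : ℕ∞) := hn ▸ le_iSup (fun u => e u - 1) u
          simpa using tsub_le_iff_right.mp h2
        · by_contra hno
          push_neg at hno
          have hlt : ∀ u, e u - 1 ≤ ((n - 1 : ℕ) : ℕ∞) := by
            intro u
            have hle : e u - 1 ≤ (n : ℕ∞) := hn ▸ le_iSup (fun u => e u - 1) u
            rcases lt_or_ge (e u - 1) (n : ℕ∞) with h | h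
            · lift (e u - 1) to ℕ using (ne_top_of_lt h) with m hm
              exact_mod_cast Nat.le_sub_one_of_lt (by exact_mod_cast h)
            · exfalso
              have heq : e u - 1 = (n : ℕ∞) := le_antisymm hle h
              have h1 : (1 : ℕ∞) ≤ e u := by
                rw [ENat.one_le_iff_ne_zero]
                intro h0
                rw [h0, zero_tsub] at heq
                have : n = 0 := by exact_mod_cast heq.symm
                omega
              exact hno u (by rw [← heq, tsub_add_cancel_of_le h1])
          have : ((n : ℕ) : ℕ∞) ≤ ((n - 1 : ℕ) : ℕ∞) := hn ▸ iSup_le hlt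
          have : n ≤ n - 1 := by exact_mod_cast this
          omega
      obtain ⟨u0, hu0⟩ := hu0
      calc ((n : ℕ∞) + 1) * (τ : ℕ∞) - 1 = e u0 * τ - 1 := by rw [hu0]
        _ ≤ ⨆ u, (e u * τ - 1) := le_iSup (fun u => e u * τ - 1) u0



/-- replacing each vertex in each bag of a tree decomposition of the
underlying graph by all of its `τ` appearances yields a tree decomposition of the
undirected static expansion, of width `(width + 1)·τ − 1`. -/
theorem blowup_is_tree_decomposition_of_expansion {V : Type} [Nonempty V] {τ : ℕ}
    (hτ : 1 ≤ τ) (layers : Fin τ → SimpleGraph V)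
    (d : TreeDecomp (underlying layers)) :
    (∀ p : V × Fin τ, ∃ u, p ∈ {q : V × Fin τ | q.1 ∈ d.bags u}) ∧
    (∀ p q : V × Fin τ, (expansion layers).Adj p q →
        ∃ u, p ∈ {r : V × Fin τ | r.1 ∈ d.bags u} ∧ q ∈ {r : V × Fin τ | r.1 ∈ d.bags u}) ∧
    (∀ p : V × Fin τ,
        (SimpleGraph.induce {u | p ∈ {r : V × Fin τ | r.1 ∈ d.bags u}} d.T).Connected) ∧
    (⨆ u, (({q : V × Fin τ | q.1 ∈ d.bags u} : Set (V × Fin τ)).encard - 1)) =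
      (d.width + 1) * (τ : ℕ∞) - 1 := by
  have hlayer : ∀ (t : Fin τ) ⦃v w : V⦄, (layers t).Adj v w → (underlying layers).Adj v w := by
    intro t v w h
    exact le_iSup layers t h
  refine ⟨fun p => d.bags_cover p.1, ?_, fun p => d.bags_subtree p.1, ?_⟩
  · intro p q hpq
    rw [expansion, SimpleGraph.fromRel_adj] at hpq
    obtain ⟨hne, h | h⟩ := hpq
    · rcases h with ⟨_, h⟩ | ⟨h, _⟩
      · exact d.bags_edge (hlayer _ h)
      · obtain ⟨u, hu⟩ := d.bags_cover p.1
        exact ⟨u, hu, by simpa [← h] using hu⟩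
    · rcases h with ⟨_, h⟩ | ⟨h, _⟩
      · obtain ⟨u, hu1, hu2⟩ := d.bags_edge (hlayer _ h)
        exact ⟨u, hu2, hu1⟩
      · obtain ⟨u, hu⟩ := d.bags_cover p.1
        exact ⟨u, hu, by simpa [h] using hu⟩
  · have hbag : ∀ u, ({q : V × Fin τ | q.1 ∈ d.bags u} : Set (V × Fin τ)).encard
        = (d.bags u).encard * (τ : ℕ∞) := by
      intro u
      have : {q : V × Fin τ | q.1 ∈ d.bags u} = (d.bags u) ×ˢ (Set.univ : Set (Fin τ)) := by
        ext q; simp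
      rw [this, my_encard_prod]
      simp [Set.encard_univ]
    have hne : Nonempty d.ι := ⟨(d.bags_cover (Classical.arbitrary V)).choose⟩
    have hpos : ∃ u, 1 ≤ (d.bags u).encard := by
      obtain ⟨u, hu⟩ := d.bags_cover (Classical.arbitrary V)
      exact ⟨u, Set.one_le_encard_iff_nonempty.mpr ⟨_, hu⟩⟩
    simp only [hbag]
    exact arith_aux hτ (fun u => (d.bags u).encard) hpos
end

section
/- If two vertices v and w of a temporal graph are in the same connected component of every layer G₁, …, G_τ, and τ ≥ n − 1 where n = |V|, then there is a strict temporal walk from v to w arriving within at most n − 1 time steps; more precisely, an agent starting at v at time 0 can reach w by time n − 1 by traversing at most one edge per time step. -/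
open scoped Classical

/-- If `v ∈ s`, `w ∉ s` and `v, w` are connected, there is an edge leaving `s`. -/
lemma exists_boundary_edge {V : Type} (G : SimpleGraph V) (s : Set V) {v w : V}
    (hr : G.Reachable v w) (hv : v ∈ s) (hw : w ∉ s) :
    ∃ x ∈ s, ∃ y, y ∉ s ∧ G.Adj x y := by
  obtain ⟨p⟩ := hr
  induction p with
  | nil => exact absurd hv hw
  | @cons a b c h p ih =>
    by_cases hb : b ∈ s
    · exact ih hb hw
    · exact ⟨a, hv, b, hb, h⟩

noncomputable def reachSet {V : Type} [Fintype V] {τ : ℕ}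
    (layers : Fin τ → SimpleGraph V) (v : V) : ℕ → Finset V
  | 0 => {v}
  | t + 1 => (reachSet layers v t) ∪
      Finset.univ.filter (fun y => ∃ x ∈ reachSet layers v t,
        ∃ h : t < τ, (layers ⟨t, h⟩).Adj x y)

lemma reachSet_mono {V : Type} [Fintype V] {τ : ℕ}
    (layers : Fin τ → SimpleGraph V) (v : V) (t : ℕ) :
    reachSet layers v t ⊆ reachSet layers v (t + 1) := by
  simp [reachSet]

lemma mem_reachSet_self {V : Type} [Fintype V] {τ : ℕ}
    (layers : Fin τ → SimpleGraph V) (v : V) (t : ℕ) :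
    v ∈ reachSet layers v t := by
  induction t with
  | zero => simp [reachSet]
  | succ n ih => exact reachSet_mono layers v n ih

lemma reachSet_grow {V : Type} [Fintype V] {τ : ℕ}
    (layers : Fin τ → SimpleGraph V) (v w : V) (t : ℕ) (ht : t < τ)
    (hconn : (layers ⟨t, ht⟩).Reachable v w)
    (hw : w ∉ reachSet layers v t) :
    (reachSet layers v t).card + 1 ≤ (reachSet layers v (t + 1)).card := by
  obtain ⟨x, hx, y, hy, hadj⟩ :=
    exists_boundary_edge (layers ⟨t, ht⟩) (↑(reachSet layers v t) : Set V) hconn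
      (by exact_mod_cast mem_reachSet_self layers v t) (by exact_mod_cast hw)
  have hy' : y ∈ reachSet layers v (t + 1) := by
    simp only [reachSet, Finset.mem_union, Finset.mem_filter, Finset.mem_univ]
    exact Or.inr ⟨trivial, x, by exact_mod_cast hx, ht, hadj⟩
  have hsub : insert y (reachSet layers v t) ⊆ reachSet layers v (t + 1) := by
    intro z hz
    rcases Finset.mem_insert.mp hz with rfl | hz
    · exact hy'
    · exact reachSet_mono layers v t hz
  calc (reachSet layers v t).card + 1
      = (insert y (reachSet layers v t)).card := by
        rw [Finset.card_insert_of_notMem (by exact_mod_cast hy)]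
    _ ≤ _ := Finset.card_le_card hsub

lemma reachSet_walk {V : Type} [Fintype V] {τ : ℕ}
    (layers : Fin τ → SimpleGraph V) (v : V) (t : ℕ) :
    ∀ x ∈ reachSet layers v t, ∃ f : ℕ → V, f 0 = v ∧ f t = x ∧
      ∀ i : ℕ, i < t →
        f (i + 1) = f i ∨ ∃ h : i < τ, (layers ⟨i, h⟩).Adj (f i) (f (i + 1)) := by
  induction t with
  | zero =>
    intro x hx
    simp only [reachSet, Finset.mem_singleton] at hx
    exact ⟨fun _ => v, rfl, hx ▸ rfl, fun i hi => absurd hi (by omega)⟩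
  | succ t ih =>
    intro x hx
    simp only [reachSet, Finset.mem_union, Finset.mem_filter, Finset.mem_univ,
      true_and] at hx
    rcases hx with hx | ⟨y, hy, hτ', hadj⟩
    · obtain ⟨f, hf0, hft, hstep⟩ := ih x hx
      refine ⟨fun i => if i ≤ t then f i else x, by simp [hf0], by simp, ?_⟩
      intro i hi
      by_cases hit : i + 1 ≤ t
      · simpa [hit, Nat.le_of_succ_le hit] using hstep i (by omega)
      · have : i = t := by omega
        subst this
        left
        simp [hft]
    · obtain ⟨f, hf0, hft, hstep⟩ := ih y hy
      refine ⟨fun i => if i ≤ t then f i else x, by simp [hf0], by simp, ?_⟩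
      intro i hi
      by_cases hit : i + 1 ≤ t
      · simpa [hit, Nat.le_of_succ_le hit] using hstep i (by omega)
      · have : i = t := by omega
        subst this
        right
        exact ⟨hτ', by simpa [hft] using hadj⟩

/-- if `v` and `w` lie in the same connected component of every layer and
`τ ≥ n − 1` with `n = |V|`, then an agent starting at `v` at time 0, traversing at most
one edge per time step (each step using an edge of the current layer, or waiting), can
reach `w` by time `n − 1`. -/
theorem reach_within_card_steps {V : Type} [Fintype V] {τ : ℕ}
    (layers : Fin τ → SimpleGraph V) (v w : V)
    (hτ : Fintype.card V - 1 ≤ τ)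
    (hconn : ∀ t : Fin τ, (layers t).Reachable v w) :
    ∃ f : ℕ → V, f 0 = v ∧ f (Fintype.card V - 1) = w ∧
      ∀ i : ℕ, i < Fintype.card V - 1 →
        f (i + 1) = f i ∨ ∃ h : i < τ, (layers ⟨i, h⟩).Adj (f i) (f (i + 1)) := by
  set n := Fintype.card V with hn
  have key : ∀ t, t ≤ n - 1 → w ∈ reachSet layers v t ∨ t + 1 ≤ (reachSet layers v t).card := by
    intro t ht
    induction t with
    | zero => right; simp [reachSet]
    | succ t ih =>
      rcases ih (by omega) with hw | hc
      · exact Or.inl (reachSet_mono layers v t hw)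
      · by_cases hw : w ∈ reachSet layers v t
        · exact Or.inl (reachSet_mono layers v t hw)
        · have ht' : t < τ := by omega
          right
          have := reachSet_grow layers v w t ht' (hconn ⟨t, ht'⟩) hw
          omega
      /- done -/
  have hwmem : w ∈ reachSet layers v (n - 1) := by
    rcases key (n - 1) le_rfl with h | h
    · exact h
    · have hcard : (reachSet layers v (n - 1)).card ≤ n := Finset.card_le_univ _
      have : (reachSet layers v (n - 1)) = Finset.univ := by
        apply Finset.eq_univ_of_card
        have hn1 : 1 ≤ n := Fintype.card_pos_iff.mpr ⟨v⟩
        omega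
      simp [this]
  exact reachSet_walk layers v (n - 1) w hwmem
end
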